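/- Any finite-dimensional (left) comodule C over a graded connected Hopf algebra whose graded dual is an enveloping algebra of a graded Lie algebra concentrated in positive degrees (such as the Connes–Kreimer Hopf algebra of rooted trees H_R) admits a complete flag of subcomodules: there exist subcomodules C^(1) ⊂ C^(2) ⊂ ... ⊂ C^(n) = C with dim C^(i) = i, where n = dim C. -/

import Mathlib

open scoped TensorProduct
open LinearMap TensorProduct

set_option maxHeartbeats 1000000
set_option synthInstance.maxHeartbeats 200000

section Graded
variable {H : Type*} [CommRing H] [HopfAlgebra ℚ H]
  (𝒜 : ℕ → Submodule ℚ H) [GradedAlgebra 𝒜]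

noncomputable def gproj (k : ℕ) : H →ₗ[ℚ] H :=
  (𝒜 k).subtype ∘ₗ (DirectSum.component ℚ ℕ (fun i => ↥(𝒜 i)) k) ∘ₗ
    (DirectSum.decomposeLinearEquiv 𝒜).toLinearMap

lemma gproj_apply (k : ℕ) (h : H) : gproj 𝒜 k h = (DirectSum.decompose 𝒜 h k : H) := rfl

lemma gproj_mem (k : ℕ) (h : H) : gproj 𝒜 k h ∈ 𝒜 k := (DirectSum.decompose 𝒜 h k).2

lemma gproj_of_mem {k : ℕ} {h : H} (hm : h ∈ 𝒜 k) : gproj 𝒜 k h = h := by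
  rw [gproj_apply]; exact DirectSum.decompose_of_mem_same 𝒜 hm

lemma gproj_of_mem_ne {k m : ℕ} {h : H} (hm : h ∈ 𝒜 m) (hne : m ≠ k) : gproj 𝒜 k h = 0 := by
  rw [gproj_apply]; exact DirectSum.decompose_of_mem_ne 𝒜 hm hne

lemma gproj_one : gproj 𝒜 0 (1 : H) = 1 := gproj_of_mem 𝒜 (SetLike.one_mem_graded 𝒜)

lemma gproj_bound (h : H) : ∃ N, ∀ k, N < k → gproj 𝒜 k h = 0 := by
  classical
  refine ⟨(DirectSum.decompose 𝒜 h).support.sup id, fun k hk => ?_⟩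
  rw [gproj_apply]
  have : k ∉ (DirectSum.decompose 𝒜 h).support := by
    intro hmem
    have h2 : id k ≤ (DirectSum.decompose 𝒜 h).support.sup id := Finset.le_sup hmem
    simp only [id_eq] at h2
    omega
  rw [DFinsupp.notMem_support_iff.mp this, Submodule.coe_zero]

lemma gproj_sum {h : H} {N : ℕ} (hb : ∀ k, N < k → gproj 𝒜 k h = 0) :
    ∑ k ∈ Finset.range (N + 1), gproj 𝒜 k h = h := by
  classical
  have hsub : (DirectSum.decompose 𝒜 h).support ⊆ Finset.range (N + 1) := by
    intro k hk
    rw [Finset.mem_range]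
    by_contra hlt
    have := hb k (by omega)
    rw [gproj_apply] at this
    exact DFinsupp.mem_support_iff.mp hk (Subtype.ext this)
  calc ∑ k ∈ Finset.range (N + 1), gproj 𝒜 k h
      = ∑ k ∈ (DirectSum.decompose 𝒜 h).support, (DirectSum.decompose 𝒜 h k : H) := by
        refine (Finset.sum_subset hsub ?_).symm
        intro k _ hk
        rw [gproj_apply, DFinsupp.notMem_support_iff.mp hk, Submodule.coe_zero]
    _ = h := DirectSum.sum_support_decompose 𝒜 h

lemma hopf_one_ne_zero : (1 : H) ≠ 0 := by
  intro h
  have h1 := Bialgebra.counit_one (R := ℚ) (A := H)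
  rw [h, map_zero] at h1
  exact one_ne_zero h1.symm

variable (hconn : 𝒜 0 = Submodule.span ℚ {(1 : H)})

/-- The coefficient functional of the degree-0 projection. -/
noncomputable def sig : H →ₗ[ℚ] ℚ :=
  (LinearEquiv.toSpanNonzeroSingleton ℚ H 1 (hopf_one_ne_zero (H := H))).symm.toLinearMap ∘ₗ
    LinearMap.codRestrict (Submodule.span ℚ {(1 : H)}) (gproj 𝒜 0)
      (fun h => hconn ▸ gproj_mem 𝒜 0 h)

lemma sig_spec (h : H) : gproj 𝒜 0 h = sig 𝒜 hconn h • 1 := by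
  set u := LinearMap.codRestrict (Submodule.span ℚ {(1 : H)}) (gproj 𝒜 0)
      (fun h => hconn ▸ gproj_mem 𝒜 0 h) h with hu
  have h1 : gproj 𝒜 0 h = (u : H) := rfl
  have h2 : (LinearEquiv.toSpanNonzeroSingleton ℚ H 1 (hopf_one_ne_zero (H := H)))
      ((LinearEquiv.toSpanNonzeroSingleton ℚ H 1 (hopf_one_ne_zero (H := H))).symm u) = u :=
    LinearEquiv.apply_symm_apply _ _
  have h3 := congrArg (Subtype.val) h2
  rw [LinearEquiv.toSpanNonzeroSingleton_apply] at h3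
  exact h1.trans h3.symm

lemma counit_sig (h : H) : Coalgebra.counit (R := ℚ) (gproj 𝒜 0 h) = sig 𝒜 hconn h := by
  rw [sig_spec 𝒜 hconn, map_smul, Bialgebra.counit_one, smul_eq_mul, mul_one]

lemma sig_one : sig 𝒜 hconn (1 : H) = 1 := by
  rw [← counit_sig, gproj_one, Bialgebra.counit_one]



local notation "Δ" => Coalgebra.comul (R := ℚ) (A := H)
local notation "ε" => Coalgebra.counit (R := ℚ) (A := H)

lemma map_gproj_comp_subtype_ne {a b p q : ℕ} (h : ¬(p = a ∧ q = b)) :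
    (TensorProduct.map (gproj 𝒜 p) (gproj 𝒜 q)).comp
      (TensorProduct.map (𝒜 a).subtype (𝒜 b).subtype) = 0 := by
  apply TensorProduct.ext'
  intro x y
  simp only [LinearMap.comp_apply, TensorProduct.map_tmul, Submodule.coe_subtype,
    LinearMap.zero_apply]
  by_cases hpa : p = a
  · have hqb : q ≠ b := fun hq => h ⟨hpa, hq⟩
    rw [gproj_of_mem_ne 𝒜 y.2 (Ne.symm hqb), TensorProduct.tmul_zero]
  · rw [gproj_of_mem_ne 𝒜 x.2 (Ne.symm hpa), TensorProduct.zero_tmul]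

lemma map_gproj_comp_subtype_same (a b : ℕ) :
    (TensorProduct.map (gproj 𝒜 a) (gproj 𝒜 b)).comp
      (TensorProduct.map (𝒜 a).subtype (𝒜 b).subtype) =
    TensorProduct.map (𝒜 a).subtype (𝒜 b).subtype := by
  apply TensorProduct.ext'
  intro x y
  simp only [LinearMap.comp_apply, TensorProduct.map_tmul, Submodule.coe_subtype]
  rw [gproj_of_mem 𝒜 x.2, gproj_of_mem 𝒜 y.2]

variable (hgradedComul : ∀ n : ℕ, ∀ x ∈ 𝒜 n,
      (Coalgebra.comul x : H ⊗[ℚ] H) ∈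
        ⨆ p ∈ Finset.HasAntidiagonal.antidiagonal n,
          LinearMap.range (TensorProduct.map (𝒜 p.1).subtype (𝒜 p.2).subtype))

include hgradedComul in
lemma comul_proj_zero {m p q : ℕ} (hpq : p + q ≠ m) {x : H} (hx : x ∈ 𝒜 m) :
    TensorProduct.map (gproj 𝒜 p) (gproj 𝒜 q) (Δ x) = 0 := by
  have hmem := hgradedComul m x hx
  have hle : (⨆ ab ∈ Finset.HasAntidiagonal.antidiagonal m,
      LinearMap.range (TensorProduct.map (𝒜 ab.1).subtype (𝒜 ab.2).subtype)) ≤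
      LinearMap.ker (TensorProduct.map (gproj 𝒜 p) (gproj 𝒜 q)) := by
    refine iSup₂_le fun ab hab => ?_
    rw [LinearMap.range_le_ker_iff]
    refine map_gproj_comp_subtype_ne 𝒜 ?_
    rintro ⟨rfl, rfl⟩
    exact hpq (Finset.HasAntidiagonal.mem_antidiagonal.mp hab)
  exact hle hmem

include hgradedComul in
lemma comul_sum_proj {m : ℕ} {x : H} (hx : x ∈ 𝒜 m) :
    ∑ ab ∈ Finset.HasAntidiagonal.antidiagonal m,
      TensorProduct.map (gproj 𝒜 ab.1) (gproj 𝒜 ab.2) (Δ x) = Δ x := by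
  classical
  have hmem := hgradedComul m x hx
  have hle : (⨆ ab ∈ Finset.HasAntidiagonal.antidiagonal m,
      LinearMap.range (TensorProduct.map (𝒜 ab.1).subtype (𝒜 ab.2).subtype)) ≤
      LinearMap.ker ((∑ ab ∈ Finset.HasAntidiagonal.antidiagonal m,
        TensorProduct.map (gproj 𝒜 ab.1) (gproj 𝒜 ab.2)) - LinearMap.id) := by
    refine iSup₂_le fun ab hab => ?_
    rintro z ⟨u, rfl⟩
    simp only [LinearMap.mem_ker, LinearMap.sub_apply, LinearMap.id_apply,
      LinearMap.coe_sum, Finset.sum_apply, sub_eq_zero]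
    rw [Finset.sum_eq_single ab]
    · simpa using LinearMap.congr_fun (map_gproj_comp_subtype_same 𝒜 ab.1 ab.2) u
    · intro pq hpq hne
      simpa using LinearMap.congr_fun
        (map_gproj_comp_subtype_ne 𝒜 (p := pq.1) (q := pq.2) (a := ab.1) (b := ab.2)
          (fun hc => hne (Prod.ext hc.1 hc.2))) u
    · exact fun h => absurd hab h
  have hker := hle hmem
  simp only [LinearMap.mem_ker, LinearMap.sub_apply, LinearMap.id_apply,
    LinearMap.coe_sum, Finset.sum_apply, sub_eq_zero] at hker
  exact hker

include hconn hgradedComul in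
lemma counit_vanish {n : ℕ} (hn : n ≠ 0) {x : H} (hx : x ∈ 𝒜 n) : ε x = 0 := by
  classical
  -- Step A : the (0,n)-component of Δ x is 1 ⊗ y
  set y : H := (TensorProduct.lid ℚ H) (TensorProduct.map (sig 𝒜 hconn) (gproj 𝒜 n) (Δ x))
    with hy
  have opA : TensorProduct.map (gproj 𝒜 0) (gproj 𝒜 n) =
      (TensorProduct.mk ℚ H H 1) ∘ₗ (TensorProduct.lid ℚ H).toLinearMap ∘ₗ
        TensorProduct.map (sig 𝒜 hconn) (gproj 𝒜 n) := by
    apply TensorProduct.ext'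
    intro a b
    simp only [LinearMap.comp_apply, TensorProduct.map_tmul, LinearEquiv.coe_coe,
      TensorProduct.lid_tmul, TensorProduct.mk_apply]
    rw [sig_spec 𝒜 hconn]
    exact TensorProduct.smul_tmul _ _ _
  have stepA : TensorProduct.map (gproj 𝒜 0) (gproj 𝒜 n) (Δ x) = (1 : H) ⊗ₜ[ℚ] y := by
    rw [opA]; rfl
  -- Step B : y = x
  have hyn : gproj 𝒜 n y = y := by
    have : gproj 𝒜 n ∘ₗ (TensorProduct.lid ℚ H).toLinearMap ∘ₗ
        TensorProduct.map (sig 𝒜 hconn) (gproj 𝒜 n) =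
        (TensorProduct.lid ℚ H).toLinearMap ∘ₗ TensorProduct.map (sig 𝒜 hconn) (gproj 𝒜 n) := by
      apply TensorProduct.ext'
      intro a b
      simp only [LinearMap.comp_apply, TensorProduct.map_tmul, LinearEquiv.coe_coe,
        TensorProduct.lid_tmul, map_smul]
      rw [gproj_of_mem 𝒜 (gproj_mem 𝒜 n b)]
    exact congrFun (congrArg DFunLike.coe this) (Δ x)
  have stepB : y = x := by
    have hcu : (TensorProduct.lid ℚ H) ((ε).rTensor H (Δ x)) = x := by
      rw [Coalgebra.rTensor_counit_comul, TensorProduct.lid_tmul, one_smul]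
    have hxn : gproj 𝒜 n x = x := gproj_of_mem 𝒜 hx
    have hsum := comul_sum_proj 𝒜 hgradedComul hx
    have expand : x = ∑ ab ∈ Finset.HasAntidiagonal.antidiagonal n, gproj 𝒜 n ((TensorProduct.lid ℚ H)
        ((ε).rTensor H (TensorProduct.map (gproj 𝒜 ab.1) (gproj 𝒜 ab.2) (Δ x)))) := by
      have e2 : x = gproj 𝒜 n ((TensorProduct.lid ℚ H) ((ε).rTensor H
          (∑ ab ∈ Finset.HasAntidiagonal.antidiagonal n,
            TensorProduct.map (gproj 𝒜 ab.1) (gproj 𝒜 ab.2) (Δ x)))) := by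
        rw [hsum, hcu, hxn]
      rw [map_sum, map_sum, map_sum] at e2
      exact e2
    have hvan : ∀ ab ∈ Finset.HasAntidiagonal.antidiagonal n, ab ≠ ((0 : ℕ), n) →
        gproj 𝒜 n ((TensorProduct.lid ℚ H)
          ((ε).rTensor H (TensorProduct.map (gproj 𝒜 ab.1) (gproj 𝒜 ab.2) (Δ x)))) = 0 := by
      intro ab hab hne
      have hb : ab.2 ≠ n := by
        intro h2
        apply hne
        have := Finset.HasAntidiagonal.mem_antidiagonal.mp hab
        ext <;> omega
      have opz : gproj 𝒜 n ∘ₗ (TensorProduct.lid ℚ H).toLinearMap ∘ₗ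
          (ε).rTensor H ∘ₗ TensorProduct.map (gproj 𝒜 ab.1) (gproj 𝒜 ab.2) = 0 := by
        apply TensorProduct.ext'
        intro a b
        simp only [LinearMap.comp_apply, TensorProduct.map_tmul, LinearMap.rTensor_tmul,
          LinearEquiv.coe_coe, TensorProduct.lid_tmul, map_smul, LinearMap.zero_apply]
        rw [gproj_of_mem_ne 𝒜 (gproj_mem 𝒜 ab.2 b) hb, smul_zero]
      exact congrFun (congrArg DFunLike.coe opz) (Δ x)
    rw [Finset.sum_eq_single ((0 : ℕ), n) hvan (fun h => absurd (Finset.HasAntidiagonal.mem_antidiagonal.mpr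
      (by simp)) h)] at expand
    rw [stepA] at expand
    simp only [LinearMap.rTensor_tmul, TensorProduct.lid_tmul, Bialgebra.counit_one,
      one_smul] at expand
    rw [hyn] at expand
    exact expand.symm
  -- Step C : ε x • 1 = 0
  have hx0 : gproj 𝒜 0 x = 0 := gproj_of_mem_ne 𝒜 hx hn
  have hcu2 : (TensorProduct.rid ℚ H) ((ε).lTensor H (Δ x)) = x := by
    rw [Coalgebra.lTensor_counit_comul, TensorProduct.rid_tmul, one_smul]
  have hsum := comul_sum_proj 𝒜 hgradedComul hx
  have expand2 : gproj 𝒜 0 x = ∑ ab ∈ Finset.HasAntidiagonal.antidiagonal n, gproj 𝒜 0 ((TensorProduct.rid ℚ H)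
      ((ε).lTensor H (TensorProduct.map (gproj 𝒜 ab.1) (gproj 𝒜 ab.2) (Δ x)))) := by
    have e2 : gproj 𝒜 0 x = gproj 𝒜 0 ((TensorProduct.rid ℚ H) ((ε).lTensor H
        (∑ ab ∈ Finset.HasAntidiagonal.antidiagonal n,
          TensorProduct.map (gproj 𝒜 ab.1) (gproj 𝒜 ab.2) (Δ x)))) := by
      rw [hsum, hcu2]
    rw [map_sum, map_sum, map_sum] at e2
    exact e2
  have hvan2 : ∀ ab ∈ Finset.HasAntidiagonal.antidiagonal n, ab ≠ ((0 : ℕ), n) →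
      gproj 𝒜 0 ((TensorProduct.rid ℚ H)
        ((ε).lTensor H (TensorProduct.map (gproj 𝒜 ab.1) (gproj 𝒜 ab.2) (Δ x)))) = 0 := by
    intro ab hab hne
    have ha : ab.1 ≠ 0 := by
      intro h1
      apply hne
      have := Finset.HasAntidiagonal.mem_antidiagonal.mp hab
      ext <;> omega
    have opz : gproj 𝒜 0 ∘ₗ (TensorProduct.rid ℚ H).toLinearMap ∘ₗ
        (ε).lTensor H ∘ₗ TensorProduct.map (gproj 𝒜 ab.1) (gproj 𝒜 ab.2) = 0 := by
      apply TensorProduct.ext'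
      intro a b
      simp only [LinearMap.comp_apply, TensorProduct.map_tmul, LinearMap.lTensor_tmul,
        LinearEquiv.coe_coe, TensorProduct.rid_tmul, map_smul, LinearMap.zero_apply]
      rw [gproj_of_mem_ne 𝒜 (gproj_mem 𝒜 ab.1 a) ha, smul_zero]
    exact congrFun (congrArg DFunLike.coe opz) (Δ x)
  rw [Finset.sum_eq_single ((0 : ℕ), n) hvan2 (fun h => absurd (Finset.HasAntidiagonal.mem_antidiagonal.mpr
    (by simp)) h)] at expand2
  rw [stepA, stepB] at expand2
  simp only [LinearMap.lTensor_tmul, TensorProduct.rid_tmul] at expand2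
  rw [hx0, map_smul, gproj_one] at expand2
  have := expand2.symm
  rcases smul_eq_zero.mp this with h | h
  · exact h
  · exact absurd h (hopf_one_ne_zero (H := H))

section Comodule
variable {C : Type*} [AddCommGroup C] [Module ℚ C] [FiniteDimensional ℚ C]
  (ρ : C →ₗ[ℚ] H ⊗[ℚ] C)

/-- The degree-`k` component of the coaction. -/
noncomputable def rhok (k : ℕ) : C →ₗ[ℚ] H ⊗[ℚ] C :=
  (LinearMap.rTensor C (gproj 𝒜 k)) ∘ₗ ρ

lemma tensor_bound (t : H ⊗[ℚ] C) :
    ∃ N, (∀ k, N < k → LinearMap.rTensor C (gproj 𝒜 k) t = 0) ∧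
      ∑ k ∈ Finset.range (N + 1), LinearMap.rTensor C (gproj 𝒜 k) t = t := by
  classical
  induction t using TensorProduct.induction_on with
  | zero => exact ⟨0, fun k _ => map_zero _, by simp⟩
  | tmul h c =>
    obtain ⟨N, hN⟩ := gproj_bound 𝒜 h
    refine ⟨N, fun k hk => ?_, ?_⟩
    · rw [LinearMap.rTensor_tmul, hN k hk, TensorProduct.zero_tmul]
    · simp only [LinearMap.rTensor_tmul]
      rw [← TensorProduct.sum_tmul, gproj_sum 𝒜 hN]
  | add t1 t2 ih1 ih2 =>
    obtain ⟨N1, hv1, hs1⟩ := ih1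
    obtain ⟨N2, hv2, hs2⟩ := ih2
    refine ⟨max N1 N2, fun k hk => ?_, ?_⟩
    · rw [map_add, hv1 k (by omega), hv2 k (by omega), add_zero]
    · have e1 : ∑ k ∈ Finset.range (max N1 N2 + 1), LinearMap.rTensor C (gproj 𝒜 k) t1 = t1 := by
        rw [← Finset.sum_subset (Finset.range_subset_range.mpr (by omega : N1 + 1 ≤ max N1 N2 + 1))
          (fun k _ hk => hv1 k (by simp only [Finset.mem_range] at hk ⊢; omega))]
        exact hs1
      have e2 : ∑ k ∈ Finset.range (max N1 N2 + 1), LinearMap.rTensor C (gproj 𝒜 k) t2 = t2 := by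
        rw [← Finset.sum_subset (Finset.range_subset_range.mpr (by omega : N2 + 1 ≤ max N1 N2 + 1))
          (fun k _ hk => hv2 k (by simp only [Finset.mem_range] at hk ⊢; omega))]
        exact hs2
      simp only [map_add, Finset.sum_add_distrib, e1, e2]

lemma rhok_bound : ∃ N, ∀ k, N < k → ∀ x : C, rhok 𝒜 ρ k x = 0 := by
  classical
  set b := Module.finBasis ℚ C
  choose f hf using fun i => tensor_bound 𝒜 (ρ (b i))
  refine ⟨Finset.univ.sup f, fun k hk x => ?_⟩
  have : rhok 𝒜 ρ k = 0 := by
    apply b.ext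
    intro i
    have : f i ≤ Finset.univ.sup f := Finset.le_sup (Finset.mem_univ i)
    exact (hf i).1 k (by omega)
  rw [this]; rfl

variable (hcounit : ∀ x : C,
      (TensorProduct.lid ℚ C)
          ((LinearMap.rTensor C (Coalgebra.counit (R := ℚ))) (ρ x)) = x)

include hconn hgradedComul hcounit in
lemma rhok_zero (x : C) : rhok 𝒜 ρ 0 x = (1 : H) ⊗ₜ[ℚ] x := by
  obtain ⟨N, hv, hs⟩ := tensor_bound 𝒜 (ρ x)
  -- ε ∘ gproj k = 0 for k ≥ 1
  have hek : ∀ k, 0 < k → (ε) ∘ₗ gproj 𝒜 k = 0 := by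
    intro k hk
    ext h
    exact counit_vanish 𝒜 hconn hgradedComul (by omega) (gproj_mem 𝒜 k h)
  have he0 : (ε) ∘ₗ gproj 𝒜 0 = sig 𝒜 hconn := by
    ext h; exact counit_sig 𝒜 hconn h
  -- x = lid (rTensor sig (ρ x))
  have hx : (TensorProduct.lid ℚ C) (LinearMap.rTensor C (sig 𝒜 hconn) (ρ x)) = x := by
    have e1 := hcounit x
    conv_lhs at e1 => rw [← hs]
    rw [map_sum, map_sum] at e1
    have e2 : ∀ k ∈ Finset.range (N + 1), k ≠ 0 →
        (TensorProduct.lid ℚ C) (LinearMap.rTensor C (ε)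
          (LinearMap.rTensor C (gproj 𝒜 k) (ρ x))) = 0 := by
      intro k _ hk
      rw [← LinearMap.comp_apply, ← LinearMap.rTensor_comp, hek k (by omega)]
      simp
    rw [Finset.sum_eq_single_of_mem 0 (Finset.mem_range.mpr (by omega)) e2] at e1
    rw [← LinearMap.comp_apply, ← LinearMap.rTensor_comp, he0] at e1
    exact e1
  -- rTensor (gproj 0) = mk 1 ∘ lid ∘ rTensor sig
  have op : LinearMap.rTensor C (gproj 𝒜 0) =
      (TensorProduct.mk ℚ H C 1) ∘ₗ (TensorProduct.lid ℚ C).toLinearMap ∘ₗ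
        LinearMap.rTensor C (sig 𝒜 hconn) := by
    apply TensorProduct.ext'
    intro a c
    simp only [LinearMap.comp_apply, LinearMap.rTensor_tmul, LinearEquiv.coe_coe,
      TensorProduct.lid_tmul, TensorProduct.mk_apply]
    rw [sig_spec 𝒜 hconn]
    exact TensorProduct.smul_tmul _ _ _
  show LinearMap.rTensor C (gproj 𝒜 0) (ρ x) = _
  rw [op]
  simp only [LinearMap.comp_apply, LinearEquiv.coe_coe, TensorProduct.mk_apply, hx]

variable (hcoassoc : ∀ x : C,
      (TensorProduct.assoc ℚ H H C)
          ((LinearMap.rTensor C (Coalgebra.comul (R := ℚ))) (ρ x))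
        = (LinearMap.lTensor H ρ) (ρ x))

include hgradedComul in
lemma map_comul_gproj (p q : ℕ) :
    (TensorProduct.map (gproj 𝒜 p) (gproj 𝒜 q)) ∘ₗ (Δ) =
      (TensorProduct.map (gproj 𝒜 p) (gproj 𝒜 q)) ∘ₗ (Δ) ∘ₗ gproj 𝒜 (p + q) := by
  ext h
  obtain ⟨N, hN⟩ := gproj_bound 𝒜 h
  set M := max N (p + q) with hM
  have hsum : ∑ k ∈ Finset.range (M + 1), gproj 𝒜 k h = h :=
    gproj_sum 𝒜 (fun k hk => hN k (by omega))
  simp only [LinearMap.comp_apply]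
  conv_lhs => rw [← hsum]
  rw [map_sum, map_sum]
  rw [Finset.sum_eq_single_of_mem (p + q) (Finset.mem_range.mpr (by omega))]
  intro k _ hk
  exact comul_proj_zero 𝒜 hgradedComul (Ne.symm hk) (gproj_mem 𝒜 k h)

include hgradedComul hcoassoc in
lemma lTensor_rhok (p j : ℕ) (x : C) :
    LinearMap.lTensor H (rhok 𝒜 ρ j) (rhok 𝒜 ρ p x) =
      (TensorProduct.assoc ℚ H H C)
        (LinearMap.rTensor C ((TensorProduct.map (gproj 𝒜 p) (gproj 𝒜 j)) ∘ₗ (Δ))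
          (rhok 𝒜 ρ (p + j) x)) := by
  have step1 : LinearMap.lTensor H (rhok 𝒜 ρ j) (rhok 𝒜 ρ p x) =
      LinearMap.lTensor H (LinearMap.rTensor C (gproj 𝒜 j))
        (LinearMap.lTensor H ρ (LinearMap.rTensor C (gproj 𝒜 p) (ρ x))) := by
    show LinearMap.lTensor H ((LinearMap.rTensor C (gproj 𝒜 j)) ∘ₗ ρ) _ = _
    rw [LinearMap.lTensor_comp]
    rfl
  have swap : LinearMap.lTensor H ρ (LinearMap.rTensor C (gproj 𝒜 p) (ρ x)) =
      LinearMap.rTensor (H ⊗[ℚ] C) (gproj 𝒜 p) (LinearMap.lTensor H ρ (ρ x)) := by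
    have h1 := LinearMap.congr_fun
      (LinearMap.lTensor_comp_rTensor (f := gproj 𝒜 p) (g := ρ)) (ρ x)
    have h2 := LinearMap.congr_fun
      (LinearMap.rTensor_comp_lTensor (f := gproj 𝒜 p) (g := ρ)) (ρ x)
    simp only [LinearMap.comp_apply] at h1 h2
    rw [h1, h2]
  have op3 : (LinearMap.lTensor H (LinearMap.rTensor C (gproj 𝒜 j))) ∘ₗ
      (LinearMap.rTensor (H ⊗[ℚ] C) (gproj 𝒜 p)) ∘ₗ (TensorProduct.assoc ℚ H H C).toLinearMap =
      (TensorProduct.assoc ℚ H H C).toLinearMap ∘ₗ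
        LinearMap.rTensor C (TensorProduct.map (gproj 𝒜 p) (gproj 𝒜 j)) := by
    apply TensorProduct.ext_threefold
    intro a b c
    simp [LinearMap.rTensor_tmul, LinearMap.lTensor_tmul]
  calc LinearMap.lTensor H (rhok 𝒜 ρ j) (rhok 𝒜 ρ p x)
      = LinearMap.lTensor H (LinearMap.rTensor C (gproj 𝒜 j))
          (LinearMap.rTensor (H ⊗[ℚ] C) (gproj 𝒜 p)
            ((TensorProduct.assoc ℚ H H C)
              (LinearMap.rTensor C (Δ) (ρ x)))) := by
        rw [step1, swap, hcoassoc x]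
    _ = (TensorProduct.assoc ℚ H H C)
          (LinearMap.rTensor C (TensorProduct.map (gproj 𝒜 p) (gproj 𝒜 j))
            (LinearMap.rTensor C (Δ) (ρ x))) := by
        exact LinearMap.congr_fun op3 (LinearMap.rTensor C (Δ) (ρ x))
    _ = (TensorProduct.assoc ℚ H H C)
          (LinearMap.rTensor C ((TensorProduct.map (gproj 𝒜 p) (gproj 𝒜 j)) ∘ₗ (Δ)) (ρ x)) := by
        rw [← LinearMap.comp_apply, ← LinearMap.rTensor_comp]
    _ = (TensorProduct.assoc ℚ H H C)
          (LinearMap.rTensor C ((TensorProduct.map (gproj 𝒜 p) (gproj 𝒜 j)) ∘ₗ (Δ))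
            (rhok 𝒜 ρ (p + j) x)) := by
        set A := (TensorProduct.map (gproj 𝒜 p) (gproj 𝒜 j)) ∘ₗ (Δ) with hAdef
        have hA : A ∘ₗ gproj 𝒜 (p + j) = A := by
          rw [hAdef, LinearMap.comp_assoc]
          exact (map_comul_gproj 𝒜 hgradedComul p j).symm
        have h3 : LinearMap.rTensor C (A ∘ₗ gproj 𝒜 (p + j)) (ρ x) =
            LinearMap.rTensor C A (LinearMap.rTensor C (gproj 𝒜 (p + j)) (ρ x)) := by
          rw [LinearMap.rTensor_comp]; rfl
        rw [hA] at h3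
        exact congrArg _ h3

/-- `H ⊗ V` inside `H ⊗ C`. -/
noncomputable def TT (V : Submodule ℚ C) : Submodule ℚ (H ⊗[ℚ] C) :=
  LinearMap.range (LinearMap.lTensor H V.subtype)

lemma TT_mono {V W : Submodule ℚ C} (h : V ≤ W) : TT (H := H) V ≤ TT (H := H) W := by
  rintro t ⟨s, rfl⟩
  refine ⟨LinearMap.lTensor H (Submodule.inclusion h) s, ?_⟩
  have hcomp : W.subtype ∘ₗ Submodule.inclusion h = V.subtype := by ext; rfl
  rw [← hcomp, LinearMap.lTensor_comp]
  rfl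

lemma tmul_mem_TT {V : Submodule ℚ C} {x : C} (hx : x ∈ V) (h : H) :
    h ⊗ₜ[ℚ] x ∈ TT (H := H) V :=
  ⟨h ⊗ₜ ⟨x, hx⟩, rfl⟩

lemma mem_TT_top (t : H ⊗[ℚ] C) : t ∈ TT (H := H) (⊤ : Submodule ℚ C) :=
  LinearMap.lTensor_surjective H
    (fun y => ⟨⟨y, trivial⟩, rfl⟩ : Function.Surjective (⊤ : Submodule ℚ C).subtype) t

lemma TT_step {V : Submodule ℚ C} {f : C →ₗ[ℚ] H ⊗[ℚ] C} {t : H ⊗[ℚ] C}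
    (ht : t ∈ TT (H := H) V) (hf : LinearMap.lTensor H f t = 0) :
    t ∈ TT (H := H) (V ⊓ LinearMap.ker f) := by
  obtain ⟨s, rfl⟩ := ht
  set g := f ∘ₗ V.subtype with hg
  have h0 : LinearMap.lTensor H g s = 0 := by
    rw [hg, LinearMap.lTensor_comp]
    exact hf
  have hex := Module.Flat.lTensor_exact (R := ℚ) H (LinearMap.exact_subtype_ker_map g)
  obtain ⟨u, hu⟩ := (hex s).mp h0
  have hmem : ∀ z : LinearMap.ker g, (V.subtype ∘ₗ (LinearMap.ker g).subtype) z ∈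
      V ⊓ LinearMap.ker f := by
    intro z
    refine Submodule.mem_inf.mpr ⟨(z : V).2, LinearMap.mem_ker.mpr ?_⟩
    exact z.2
  set e : LinearMap.ker g →ₗ[ℚ] ↥(V ⊓ LinearMap.ker f) :=
    LinearMap.codRestrict _ (V.subtype ∘ₗ (LinearMap.ker g).subtype) hmem with he
  have hcomp : (V ⊓ LinearMap.ker f).subtype ∘ₗ e = V.subtype ∘ₗ (LinearMap.ker g).subtype := by
    ext; rfl
  refine ⟨LinearMap.lTensor H e u, ?_⟩
  calc LinearMap.lTensor H (V ⊓ LinearMap.ker f).subtype (LinearMap.lTensor H e u)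
      = LinearMap.lTensor H ((V ⊓ LinearMap.ker f).subtype ∘ₗ e) u := by
        rw [LinearMap.lTensor_comp]; rfl
    _ = LinearMap.lTensor H (V.subtype ∘ₗ (LinearMap.ker g).subtype) u := by rw [hcomp]
    _ = LinearMap.lTensor H V.subtype (LinearMap.lTensor H (LinearMap.ker g).subtype u) := by
        rw [LinearMap.lTensor_comp]; rfl
    _ = LinearMap.lTensor H V.subtype s := by rw [hu]

lemma TT_iInf {t : H ⊗[ℚ] C} (F : ℕ → C →ₗ[ℚ] H ⊗[ℚ] C) (s : Finset ℕ)
    (hv : ∀ j ∈ s, LinearMap.lTensor H (F j) t = 0) :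
    t ∈ TT (H := H) (⨅ j ∈ s, LinearMap.ker (F j)) := by
  classical
  induction s using Finset.induction_on with
  | empty => simpa using mem_TT_top t
  | @insert a s' ha ih =>
    have h1 := ih (fun j hj => hv j (Finset.mem_insert_of_mem hj))
    have h2 := TT_step h1 (hv a (Finset.mem_insert_self a s'))
    refine TT_mono ?_ h2
    rw [Finset.iInf_insert]
    exact le_of_eq (inf_comm _ _)

/-- The (shifted) coradical filtration of the comodule. -/
noncomputable def Dk (k : ℕ) : Submodule ℚ C :=
  ⨅ j ∈ Set.Ici k, LinearMap.ker (rhok 𝒜 ρ j)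

lemma mem_Dk {k : ℕ} {x : C} : x ∈ Dk 𝒜 ρ k ↔ ∀ j, k ≤ j → rhok 𝒜 ρ j x = 0 := by
  simp [Dk, Submodule.mem_iInf, LinearMap.mem_ker]

lemma Dk_mono {k k' : ℕ} (h : k ≤ k') : Dk 𝒜 ρ k ≤ Dk 𝒜 ρ k' := by
  intro x hx
  rw [mem_Dk] at hx ⊢
  exact fun j hj => hx j (by omega)

include hconn hgradedComul hcounit in
lemma Dk_zero : Dk 𝒜 ρ 0 = ⊥ := by
  rw [eq_bot_iff]
  intro x hx
  have h0 : rhok 𝒜 ρ 0 x = 0 := (mem_Dk 𝒜 ρ).mp hx 0 le_rfl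
  rw [rhok_zero 𝒜 hconn hgradedComul ρ hcounit x] at h0
  have := congrArg (fun t => (TensorProduct.lid ℚ C)
    (LinearMap.rTensor C (Coalgebra.counit (R := ℚ) (A := H)) t)) h0
  simp only [LinearMap.rTensor_tmul, Bialgebra.counit_one, map_zero,
    TensorProduct.lid_tmul, one_smul] at this
  simpa using this

lemma Dk_top {N : ℕ} (hN : ∀ k, N < k → ∀ x : C, rhok 𝒜 ρ k x = 0) :
    Dk 𝒜 ρ (N + 1) = ⊤ := by
  rw [eq_top_iff]
  intro x _
  rw [mem_Dk]
  exact fun j hj => hN j (by omega) x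

include hconn hgradedComul hcounit hcoassoc in
lemma rho_decomp {k : ℕ} {x : C} (hx : x ∈ Dk 𝒜 ρ (k + 1)) :
    ∃ r ∈ TT (H := H) (Dk 𝒜 ρ k), ρ x = (1 : H) ⊗ₜ[ℚ] x + r := by
  classical
  obtain ⟨N', hN'⟩ := rhok_bound 𝒜 ρ
  obtain ⟨M, hv, hs⟩ := tensor_bound 𝒜 (ρ x)
  have hle : (⨅ j ∈ Finset.Icc k N', LinearMap.ker (rhok 𝒜 ρ j)) ≤ Dk 𝒜 ρ k := by
    intro z hz
    rw [mem_Dk]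
    intro j hj
    by_cases hjN : j ≤ N'
    · simp only [Submodule.mem_iInf] at hz
      exact hz j (Finset.mem_Icc.mpr ⟨hj, hjN⟩)
    · exact hN' j (by omega) z
  have hterm : ∀ p, 1 ≤ p → rhok 𝒜 ρ p x ∈ TT (H := H) (Dk 𝒜 ρ k) := by
    intro p hp
    refine TT_mono hle (TT_iInf (rhok 𝒜 ρ) (Finset.Icc k N') ?_)
    intro j hj
    obtain ⟨hkj, -⟩ := Finset.mem_Icc.mp hj
    rw [lTensor_rhok 𝒜 hgradedComul ρ hcoassoc p j x]
    have h0 : rhok 𝒜 ρ (p + j) x = 0 := (mem_Dk 𝒜 ρ).mp hx (p + j) (by omega)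
    rw [h0, map_zero, map_zero]
  have hsplit : ρ x = rhok 𝒜 ρ 0 x +
      ∑ p ∈ Finset.Ioc 0 M, rhok 𝒜 ρ p x := by
    have : Finset.range (M + 1) = insert 0 (Finset.Ioc 0 M) := by
      ext a
      simp [Finset.mem_range, Finset.mem_Ioc]
    rw [← hs, this, Finset.sum_insert (by simp)]
    rfl
  refine ⟨∑ p ∈ Finset.Ioc 0 M, rhok 𝒜 ρ p x, ?_, ?_⟩
  · exact Submodule.sum_mem _ (fun p hp => hterm p (Finset.mem_Ioc.mp hp).1)
  · rw [hsplit, rhok_zero 𝒜 hconn hgradedComul ρ hcounit x]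

include hconn hgradedComul hcounit hcoassoc in
lemma extend_subcomodule (V : Submodule ℚ C) (hV : ∀ x ∈ V, ρ x ∈ TT (H := H) V)
    (hne : V ≠ ⊤) :
    ∃ W : Submodule ℚ C, V ≤ W ∧
      Module.finrank ℚ W = Module.finrank ℚ V + 1 ∧
      ∀ x ∈ W, ρ x ∈ TT (H := H) W := by
  classical
  obtain ⟨N', hN'⟩ := rhok_bound 𝒜 ρ
  have hex : ∃ k, ¬ Dk 𝒜 ρ k ≤ V :=
    ⟨N' + 1, by rw [Dk_top 𝒜 ρ hN']; exact fun h => hne (top_le_iff.mp h)⟩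
  have hspec : ¬ Dk 𝒜 ρ (Nat.find hex) ≤ V := Nat.find_spec hex
  have hpos : Nat.find hex ≠ 0 := by
    intro h
    apply hspec
    rw [h, Dk_zero 𝒜 hconn hgradedComul ρ hcounit]
    exact bot_le
  have hmin : Dk 𝒜 ρ (Nat.find hex - 1) ≤ V :=
    not_not.mp (Nat.find_min hex (by omega))
  obtain ⟨y, hyD, hyV⟩ := SetLike.not_le_iff_exists.mp hspec
  have hyD' : y ∈ Dk 𝒜 ρ ((Nat.find hex - 1) + 1) := by
    have he : Nat.find hex - 1 + 1 = Nat.find hex := by omega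
    rw [he]
    exact hyD
  obtain ⟨r, hr, hry⟩ := rho_decomp 𝒜 hconn hgradedComul ρ hcounit hcoassoc hyD'
  refine ⟨V ⊔ ℚ ∙ y, le_sup_left, ?_, ?_⟩
  · have hy0 : y ≠ 0 := fun h => hyV (h ▸ V.zero_mem)
    have hinf : V ⊓ (ℚ ∙ y) = ⊥ := by
      rw [eq_bot_iff]
      intro z hz
      obtain ⟨hzV, hzS⟩ := Submodule.mem_inf.mp hz
      obtain ⟨c, rfl⟩ := Submodule.mem_span_singleton.mp hzS
      rcases eq_or_ne c 0 with rfl | hc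
      · simp
      · exact absurd (show y ∈ V by
          simpa [smul_smul, inv_mul_cancel₀ hc] using V.smul_mem c⁻¹ hzV) hyV
    have hkey := Submodule.finrank_sup_add_finrank_inf_eq V (ℚ ∙ y)
    rw [hinf, finrank_bot, finrank_span_singleton hy0] at hkey
    omega
  · intro x hx
    obtain ⟨v, hv, w, hw, rfl⟩ := Submodule.mem_sup.mp hx
    obtain ⟨c, rfl⟩ := Submodule.mem_span_singleton.mp hw
    rw [map_add, map_smul]
    have h1 : ρ v ∈ TT (H := H) (V ⊔ ℚ ∙ y) := TT_mono le_sup_left (hV v hv)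
    have h2 : ρ y ∈ TT (H := H) (V ⊔ ℚ ∙ y) := by
      rw [hry]
      refine Submodule.add_mem _ ?_ ?_
      · exact tmul_mem_TT (Submodule.mem_sup_right (Submodule.mem_span_singleton_self y)) 1
      · exact TT_mono (le_trans hmin le_sup_left) hr
    exact Submodule.add_mem _ h1 (Submodule.smul_mem _ c h2)

include hconn hgradedComul hcounit hcoassoc in
lemma flag_aux : ∀ d : ℕ, d ≤ Module.finrank ℚ C →
    ∃ D : Fin (d + 1) → Submodule ℚ C, Monotone D ∧
      (∀ i, Module.finrank ℚ (D i) = (i : ℕ)) ∧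
      (∀ i, ∀ x ∈ D i, ρ x ∈ TT (H := H) (D i)) := by
  intro d
  induction d with
  | zero =>
    intro _
    refine ⟨fun _ => ⊥, monotone_const, fun i => ?_, fun i x hx => ?_⟩
    · have : (i : ℕ) = 0 := by omega
      rw [this, finrank_bot]
    · have : x = 0 := by simpa using hx
      subst this
      rw [map_zero]
      exact Submodule.zero_mem _
  | succ d ih =>
    intro hd
    obtain ⟨D, hmono, hrank, hco⟩ := ih (by omega)
    have hneq : D (Fin.last d) ≠ ⊤ := by
      intro h
      have hr := hrank (Fin.last d)
      rw [h, finrank_top] at hr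
      simp only [Fin.val_last] at hr
      omega
    obtain ⟨W, hle, hrW, hcoW⟩ := extend_subcomodule 𝒜 hconn hgradedComul ρ hcounit hcoassoc
      (D (Fin.last d)) (hco _) hneq
    refine ⟨fun i => if (i : ℕ) ≤ d then D ⟨min (i : ℕ) d, by omega⟩ else W, ?_, ?_, ?_⟩
    · intro i j hij
      dsimp only
      have hij' : (i : ℕ) ≤ (j : ℕ) := hij
      by_cases hi : (i : ℕ) ≤ d <;> by_cases hj : (j : ℕ) ≤ d
      · rw [if_pos hi, if_pos hj]
        exact hmono (show (⟨min (i : ℕ) d, by omega⟩ : Fin (d + 1)) ≤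
          ⟨min (j : ℕ) d, by omega⟩ by rw [Fin.mk_le_mk]; omega)
      · rw [if_pos hi, if_neg hj]
        refine le_trans (hmono (show (⟨min (i : ℕ) d, by omega⟩ : Fin (d + 1)) ≤
          Fin.last d by rw [Fin.le_def]; simp [Fin.val_last])) hle
      · omega
      · rw [if_neg hi, if_neg hj]
    · intro i
      dsimp only
      by_cases hi : (i : ℕ) ≤ d
      · suffices key : ∀ V : Submodule ℚ C, V = D ⟨min (i : ℕ) d, by omega⟩ →
            Module.finrank ℚ V = (i : ℕ) from key _ (if_pos hi)
        intro V hV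
        subst hV
        have := hrank ⟨min (i : ℕ) d, by omega⟩
        rw [this]
        simp only []
        omega
      · suffices key : ∀ V : Submodule ℚ C, V = W →
            Module.finrank ℚ V = (i : ℕ) from key _ (if_neg hi)
        intro V hV
        subst hV
        rw [hrW]
        have := hrank (Fin.last d)
        simp only [Fin.val_last] at this
        rw [this]
        omega
    · intro i x hx
      dsimp only at hx ⊢
      by_cases hi : (i : ℕ) ≤ d
      · rw [if_pos hi] at hx ⊢
        exact hco _ x hx
      · rw [if_neg hi] at hx ⊢
        exact hcoW x hx

end Comodule
end Graded

/-- Any finite-dimensional left comodule `C` over a graded connected Hopf algebra `H`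
over `ℚ` whose graded dual is the enveloping algebra of a Lie algebra graded in
positive degrees — here axiomatized by the grading, connectedness and homogeneity of
the coproduct, as for the Connes–Kreimer Hopf algebra of rooted trees — admits a
complete flag of subcomodules: there are subcomodules `D 0 ⊆ D 1 ⊆ ... ⊆ D n = C`
with `dim (D i) = i`, where `n = dim C`. -/
theorem finite_dimensional_comodule_has_complete_flag
    (H : Type*) [CommRing H] [HopfAlgebra ℚ H]
    (𝒜 : ℕ → Submodule ℚ H) [GradedAlgebra 𝒜]
    -- connectedness: the degree-zero component is `ℚ·1`
    (hconn : 𝒜 0 = Submodule.span ℚ {(1 : H)})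
    -- the coproduct is homogeneous of degree `0`
    (hgradedComul : ∀ n : ℕ, ∀ x ∈ 𝒜 n,
      (Coalgebra.comul x : H ⊗[ℚ] H) ∈
        ⨆ p ∈ Finset.HasAntidiagonal.antidiagonal n,
          LinearMap.range (TensorProduct.map (𝒜 p.1).subtype (𝒜 p.2).subtype))
    -- a finite-dimensional left `H`-comodule `C`
    (C : Type*) [AddCommGroup C] [Module ℚ C] [FiniteDimensional ℚ C]
    (ρ : C →ₗ[ℚ] H ⊗[ℚ] C)
    (hcoassoc : ∀ x : C,
      (TensorProduct.assoc ℚ H H C)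
          ((LinearMap.rTensor C (Coalgebra.comul (R := ℚ))) (ρ x))
        = (LinearMap.lTensor H ρ) (ρ x))
    (hcounit : ∀ x : C,
      (TensorProduct.lid ℚ C)
          ((LinearMap.rTensor C (Coalgebra.counit (R := ℚ))) (ρ x)) = x) :
    ∃ D : Fin (Module.finrank ℚ C + 1) → Submodule ℚ C,
      Monotone D ∧
      (∀ i, Module.finrank ℚ (D i) = (i : ℕ)) ∧
      D (Fin.last _) = ⊤ ∧
      (∀ i, ∀ x ∈ D i,
        ρ x ∈ LinearMap.range (LinearMap.lTensor H (D i).subtype)) := by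
  obtain ⟨D, hmono, hrank, hco⟩ := flag_aux 𝒜 hconn hgradedComul ρ hcounit hcoassoc
    (Module.finrank ℚ C) le_rfl
  refine ⟨D, hmono, hrank, ?_, ?_⟩
  · apply Submodule.eq_top_of_finrank_eq
    rw [hrank (Fin.last _)]
    simp [Fin.val_last]
  · exact hco
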